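/- arXiv:1109.5880 — 3 statements merged into one kernel-verified Lean document; each statement's English description precedes it below -/
import Mathlib

section
/- Let (X₁,X₂) and (Θ₁,Θ₂) be independent random vectors with all coordinates positive. Assume X₁ and X₂ are identically distributed and asymptotically independent, and that there exist α>0 and a bounded regularly varying function R:(0,∞)→(0,∞) of index −α which stays bounded away from 0 on every bounded interval, such that P[X₁>x] ≤ R(x) for all x>0. Assume further that for some ε>0, E[Θ₁^{α+ε}]<∞ and E[Θ₂^{α+ε}]<∞. Then P[Θ₁X₁>x, Θ₂X₂>x] / R(x) → 0 as x→∞. -/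
open MeasureTheory ProbabilityTheory Filter Topology
open scoped ENNReal

noncomputable section

/-- A function, positive on `(0,∞)`, is regularly varying at infinity with index `ρ`:
for every `t > 0`, `f(tx)/f(x) → t^ρ` as `x → ∞`. -/
def RegVarying (f : ℝ → ℝ) (ρ : ℝ) : Prop :=
  (∀ x : ℝ, 0 < x → 0 < f x) ∧
    ∀ t : ℝ, 0 < t → Tendsto (fun x : ℝ => f (t * x) / f x) atTop (nhds (t ^ ρ))

variable {Ω : Type*} [MeasurableSpace Ω]

/-- The (possibly infinite) moment `E[Θ^r]`. -/
def momE (P : Measure Ω) (Θ : Ω → ℝ) (r : ℝ) : ℝ≥0∞ :=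
  ∫⁻ ω, ENNReal.ofReal (Θ ω ^ r) ∂P

/-- The RW moment conditions for the sequence `{Θ_t}` and the index `α`:
if `0 < α < 1`, then `Σ_t E[Θ_t^{α+ε} + Θ_t^{α-ε}] < ∞` for some `ε ∈ (0,α)`;
if `α ≥ 1`, then `Σ_t (E[Θ_t^{α+ε} + Θ_t^{α-ε}])^{1/(α+ε)} < ∞` for some `ε ∈ (0,α)`. -/
def RWConditions (P : Measure Ω) (Θ : ℕ → Ω → ℝ) (α : ℝ) : Prop :=
  ∃ ε : ℝ, 0 < ε ∧ ε < α ∧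
    ((α < 1 ∧ (∑' t : ℕ, (momE P (Θ t) (α + ε) + momE P (Θ t) (α - ε))) ≠ ⊤) ∨
      (1 ≤ α ∧
        (∑' t : ℕ, (momE P (Θ t) (α + ε) + momE P (Θ t) (α - ε)) ^ (1 / (α + ε))) ≠ ⊤))

/-- The tail `P[Z > x]` of a random variable, as a real number. -/
def tailP (P : Measure Ω) (Z : Ω → ℝ) (x : ℝ) : ℝ := (P {ω | x < Z ω}).toReal

/-- `X` and `Y` are asymptotically independent:
`P[X > x, Y > x] / P[X > x] → 0` and `P[X > x, Y > x] / P[Y > x] → 0` as `x → ∞`. -/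
def AsympIndep (P : Measure Ω) (X Y : Ω → ℝ) : Prop :=
  Tendsto (fun x : ℝ =>
      (P {ω | x < X ω ∧ x < Y ω}).toReal / (P {ω | x < X ω}).toReal) atTop (nhds 0) ∧
    Tendsto (fun x : ℝ =>
      (P {ω | x < X ω ∧ x < Y ω}).toReal / (P {ω | x < Y ω}).toReal) atTop (nhds 0)

/-! ### Auxiliary lemmas -/

/-- Every real `θ ≥ 1` lies in a dyadic block `[2^k, 2^(k+1))`. -/
lemma exists_dyadic (θ : ℝ) (hθ : 1 ≤ θ) : ∃ k : ℕ, (2:ℝ)^k ≤ θ ∧ θ < 2^(k+1) := by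
  classical
  have hex : ∃ n : ℕ, θ < 2 ^ (n + 1) := by
    obtain ⟨n, hn⟩ := pow_unbounded_of_one_lt θ (by norm_num : (1:ℝ) < 2)
    exact ⟨n, lt_of_lt_of_le hn (pow_le_pow_right₀ (by norm_num) (Nat.le_succ n))⟩
  refine ⟨Nat.find hex, ?_, Nat.find_spec hex⟩
  rcases Nat.eq_zero_or_pos (Nat.find hex) with h0 | hpos
  · simpa [h0] using hθ
  · have hmin := Nat.find_min hex (Nat.sub_lt hpos one_pos)
    have heq : Nat.find hex - 1 + 1 = Nat.find hex := Nat.succ_pred_eq_of_pos hpos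
    rw [heq] at hmin
    exact not_lt.1 hmin

/-- `(a^p)^k = (a^k)^p` for `a ≥ 0`. -/
lemma rpow_pow_comm (a p : ℝ) (ha : 0 ≤ a) : ∀ k : ℕ, (a ^ p) ^ k = ((a ^ k : ℝ)) ^ p := by
  intro k
  induction k with
  | zero => simp
  | succ n ih =>
      rw [pow_succ, pow_succ, ih, ← Real.mul_rpow (pow_nonneg ha n) ha]

/-- Iterating a one-step chaining bound for `R`. -/
lemma chain_iter {R : ℝ → ℝ} {x₁ K : ℝ} (hx₁ : 0 ≤ x₁) (hK : 0 ≤ K)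
    (h : ∀ y : ℝ, x₁ ≤ y → R (y / 2) ≤ K * R y) :
    ∀ (k : ℕ) (y : ℝ), x₁ * 2 ^ k ≤ y → R (y / 2 ^ k) ≤ K ^ k * R y := by
  intro k
  induction k with
  | zero => intro y hy; simpa using le_of_eq rfl
  | succ n ih =>
      intro y hy
      have h1 : x₁ ≤ y := by
        have h2 : (1:ℝ) ≤ 2 ^ (n+1) := one_le_pow₀ (by norm_num)
        nlinarith
      have h2 : x₁ * 2 ^ n ≤ y / 2 := by
        rw [le_div_iff₀ (by norm_num : (0:ℝ) < 2)]
        calc x₁ * 2 ^ n * 2 = x₁ * 2 ^ (n+1) := by ring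
          _ ≤ y := hy
      have hstep := h y h1
      have hih := ih (y / 2) h2
      have heq : y / 2 ^ (n+1) = y / 2 / 2 ^ n := by
        rw [div_div]; ring_nf
      calc R (y / 2 ^ (n+1)) = R (y / 2 / 2 ^ n) := by rw [heq]
        _ ≤ K ^ n * R (y / 2) := hih
        _ ≤ K ^ n * (K * R y) := mul_le_mul_of_nonneg_left hstep (pow_nonneg hK n)
        _ = K ^ (n+1) * R y := by ring

/-- Markov-type bound on a set where `Θ ≥ u`. -/
lemma markov_set (P : Measure Ω) (Θ : Ω → ℝ) (hΘ : Measurable Θ) {p u : ℝ}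
    (hp : 0 ≤ p) (hu : 0 < u) {A : Set ℝ} (hA : MeasurableSet A) (hAu : A ⊆ Set.Ici u) :
    P (Θ ⁻¹' A) * ENNReal.ofReal (u ^ p) ≤
      ∫⁻ ω in Θ ⁻¹' A, ENNReal.ofReal (Θ ω ^ p) ∂P := by
  rw [mul_comm, ← setLIntegral_const]
  refine setLIntegral_mono (((Real.continuous_rpow_const hp).measurable.comp hΘ).ennreal_ofReal)
    fun ω hω => ?_
  exact ENNReal.ofReal_le_ofReal (Real.rpow_le_rpow hu.le (hAu hω) hp)

/-- The truncated moment tends to zero along integer truncation levels. -/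
lemma tail_mom_tendsto (P : Measure Ω) [IsProbabilityMeasure P] (Θ : Ω → ℝ)
    (hΘ : Measurable Θ) (p : ℝ) (hp : 0 ≤ p)
    (hfin : (∫⁻ ω, ENNReal.ofReal (Θ ω ^ p) ∂P) ≠ ⊤) :
    Tendsto (fun n : ℕ => ∫⁻ ω in {ω | (n:ℝ) < Θ ω}, ENNReal.ofReal (Θ ω ^ p) ∂P)
      atTop (nhds 0) := by
  set f : Ω → ℝ≥0∞ := fun ω => ENNReal.ofReal (Θ ω ^ p) with hf
  have hfm : Measurable f := ((Real.continuous_rpow_const hp).measurable.comp hΘ).ennreal_ofReal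
  set ν := P.withDensity f with hν
  have hs : ∀ n : ℕ, MeasurableSet {ω | (n:ℝ) < Θ ω} := fun n =>
    measurableSet_lt measurable_const hΘ
  have key : ∀ n : ℕ, ∫⁻ ω in {ω | (n:ℝ) < Θ ω}, f ω ∂P = ν {ω | (n:ℝ) < Θ ω} := fun n =>
    (withDensity_apply f (hs n)).symm
  have hνfin : ν Set.univ ≠ ⊤ := by
    rw [withDensity_apply f MeasurableSet.univ, setLIntegral_univ]
    exact hfin
  have hanti : Antitone fun n : ℕ => {ω | (n:ℝ) < Θ ω} := by
    intro n m hnm ω hω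
    exact lt_of_le_of_lt (by exact_mod_cast hnm : (n:ℝ) ≤ m) hω
  have hint : (⋂ n : ℕ, {ω | (n:ℝ) < Θ ω}) = ∅ := by
    rw [Set.eq_empty_iff_forall_notMem]
    intro ω hω
    obtain ⟨n, hn⟩ := exists_nat_gt (Θ ω)
    exact absurd (Set.mem_iInter.1 hω n) (not_lt.2 hn.le)
  have htend := tendsto_measure_iInter_atTop (μ := ν)
    (fun n => (hs n).nullMeasurableSet) hanti
    ⟨0, ne_top_of_le_ne_top hνfin (measure_mono (Set.subset_univ _))⟩
  rw [hint, measure_empty] at htend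
  exact htend.congr fun n => (key n).symm

/-- The key estimate for a single pair `(X, Θ)` of independent variables. -/
lemma T2bound (P : Measure Ω) [IsProbabilityMeasure P]
    (X Θ : Ω → ℝ) (R : ℝ → ℝ) (hXm : Measurable X) (hΘm : Measurable Θ)
    (hind : IndepFun X Θ P) (p x₁ : ℝ) (hp : 0 < p) (hx₁ : 1 ≤ x₁)
    (hchain : ∀ (k : ℕ) (y : ℝ), x₁ * 2 ^ k ≤ y → R (y / 2 ^ k) ≤ ((2:ℝ) ^ p) ^ k * R y)
    (htail : ∀ y : ℝ, 0 < y → P {ω | y < X ω} ≤ ENNReal.ofReal (R y))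
    (S x : ℝ) (hS : 1 ≤ S) (hx : 0 < x) (hRx : 0 ≤ R x) :
    P {ω | S < Θ ω ∧ x < Θ ω * X ω} ≤
      (∫⁻ ω in {ω | S < Θ ω}, ENNReal.ofReal (Θ ω ^ p) ∂P) *
          ENNReal.ofReal ((2:ℝ) ^ p * R x)
        + P {ω | x / (2 * x₁) < Θ ω} := by
  set K := (2:ℝ) ^ p with hK
  have hK0 : 0 < K := Real.rpow_pos_of_pos two_pos p
  have hx₁0 : 0 < x₁ := lt_of_lt_of_le one_pos hx₁
  set A : ℕ → Set ℝ := fun k =>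
    Set.Ico ((2:ℝ)^k) ((2:ℝ)^(k+1)) ∩ Set.Ioc S (x / (2 * x₁)) with hA
  have hAmeas : ∀ k, MeasurableSet (A k) := fun k => measurableSet_Ico.inter measurableSet_Ioc
  set D : ℕ → Set Ω := fun k => Θ ⁻¹' (A k) ∩ X ⁻¹' (Set.Ioi (x / 2 ^ (k+1))) with hD
  have hsub : {ω | S < Θ ω ∧ x < Θ ω * X ω} ⊆
      (⋃ k, D k) ∪ {ω | x / (2 * x₁) < Θ ω} := by
    rintro ω ⟨hSω, hxω⟩
    by_cases hU : x / (2 * x₁) < Θ ω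
    · exact Or.inr hU
    · push_neg at hU
      left
      have hθ1 : 1 ≤ Θ ω := (lt_of_le_of_lt hS hSω).le
      have hθpos : 0 < Θ ω := lt_of_lt_of_le one_pos hθ1
      obtain ⟨k, hk1, hk2⟩ := exists_dyadic (Θ ω) hθ1
      refine Set.mem_iUnion.2 ⟨k, ⟨⟨hk1, hk2⟩, hSω, hU⟩, ?_⟩
      have h1 : x / Θ ω < X ω := (div_lt_iff₀ hθpos).2 (by linarith [mul_comm (Θ ω) (X ω)])
      have h2 : x / 2 ^ (k+1) ≤ x / Θ ω :=
        div_le_div_of_nonneg_left hx.le hθpos hk2.le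
      exact lt_of_le_of_lt h2 h1
  have hDk : ∀ k, P (D k) ≤
      (∫⁻ ω in Θ ⁻¹' (A k), ENNReal.ofReal (Θ ω ^ p) ∂P) * ENNReal.ofReal (K * R x) := by
    intro k
    by_cases hcase : x₁ * 2 ^ (k+1) ≤ x
    · have hprod : P (D k) = P (X ⁻¹' Set.Ioi (x / 2 ^ (k+1))) * P (Θ ⁻¹' (A k)) := by
        rw [hD]
        simp only []
        rw [Set.inter_comm]
        exact hind.measure_inter_preimage_eq_mul _ _ measurableSet_Ioi (hAmeas k)
      have hy : (0:ℝ) < x / 2 ^ (k+1) := div_pos hx (by positivity)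
      have htail' : P (X ⁻¹' Set.Ioi (x / 2 ^ (k+1))) ≤
          ENNReal.ofReal (((2:ℝ)^k) ^ p * (K * R x)) := by
        have h1 : P (X ⁻¹' Set.Ioi (x / 2 ^ (k+1))) = P {ω | x / 2 ^ (k+1) < X ω} := rfl
        rw [h1]
        refine le_trans (htail _ hy) (ENNReal.ofReal_le_ofReal ?_)
        calc R (x / 2 ^ (k+1)) ≤ K ^ (k+1) * R x := hchain (k+1) x hcase
          _ = ((2:ℝ)^k) ^ p * (K * R x) := by
              rw [pow_succ, hK, rpow_pow_comm 2 p (by norm_num) k]; ring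
      calc P (D k) = P (X ⁻¹' Set.Ioi (x / 2 ^ (k+1))) * P (Θ ⁻¹' (A k)) := hprod
        _ ≤ ENNReal.ofReal (((2:ℝ)^k) ^ p * (K * R x)) * P (Θ ⁻¹' (A k)) :=
            mul_le_mul_left htail' _
        _ = (P (Θ ⁻¹' (A k)) * ENNReal.ofReal (((2:ℝ)^k) ^ p)) * ENNReal.ofReal (K * R x) := by
            rw [ENNReal.ofReal_mul (by positivity)]; ring
        _ ≤ (∫⁻ ω in Θ ⁻¹' (A k), ENNReal.ofReal (Θ ω ^ p) ∂P) * ENNReal.ofReal (K * R x) :=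
            mul_le_mul_left
              (markov_set P Θ hΘm hp.le (pow_pos two_pos k) (hAmeas k)
                (fun θ hθ => hθ.1.1)) _
    · have hA0 : A k = ∅ := by
        rw [Set.eq_empty_iff_forall_notMem]
        rintro θ ⟨⟨h1, _⟩, _, h4⟩
        have h5 : (2:ℝ)^k * (2 * x₁) ≤ x := by
          have := le_trans h1 h4
          rw [le_div_iff₀ (by positivity)] at this
          linarith
        have h6 : x₁ * 2 ^ (k+1) = 2 ^ k * (2 * x₁) := by ring
        exact hcase (by linarith)
      calc P (D k) ≤ P (Θ ⁻¹' (A k)) := measure_mono Set.inter_subset_left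
        _ = 0 := by rw [hA0]; simp
        _ ≤ _ := zero_le
  have hdisj : Pairwise (Function.onFun Disjoint fun k => Θ ⁻¹' (A k)) := by
    intro k l hkl
    refine Set.disjoint_left.2 fun ω hωk hωl => ?_
    rcases lt_or_gt_of_ne hkl with h | h
    · have : (2:ℝ)^(k+1) ≤ 2^l := pow_le_pow_right₀ (by norm_num) h
      exact absurd (lt_of_lt_of_le hωk.1.2 (le_trans this hωl.1.1)) (lt_irrefl _)
    · have : (2:ℝ)^(l+1) ≤ 2^k := pow_le_pow_right₀ (by norm_num) h
      exact absurd (lt_of_lt_of_le hωl.1.2 (le_trans this hωk.1.1)) (lt_irrefl _)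
  have hUnion : (⋃ k, Θ ⁻¹' (A k)) ⊆ {ω | S < Θ ω} := by
    intro ω hω
    obtain ⟨k, hk⟩ := Set.mem_iUnion.1 hω
    exact hk.2.1
  calc P {ω | S < Θ ω ∧ x < Θ ω * X ω}
      ≤ P ((⋃ k, D k) ∪ {ω | x / (2 * x₁) < Θ ω}) := measure_mono hsub
    _ ≤ P (⋃ k, D k) + P {ω | x / (2 * x₁) < Θ ω} := measure_union_le _ _
    _ ≤ (∫⁻ ω in {ω | S < Θ ω}, ENNReal.ofReal (Θ ω ^ p) ∂P) * ENNReal.ofReal (K * R x)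
          + P {ω | x / (2 * x₁) < Θ ω} := by
        refine add_le_add_left ?_ _
        calc P (⋃ k, D k) ≤ ∑' k, P (D k) := measure_iUnion_le _
          _ ≤ ∑' k, (∫⁻ ω in Θ ⁻¹' (A k), ENNReal.ofReal (Θ ω ^ p) ∂P) *
                ENNReal.ofReal (K * R x) := ENNReal.tsum_le_tsum hDk
          _ = (∑' k, ∫⁻ ω in Θ ⁻¹' (A k), ENNReal.ofReal (Θ ω ^ p) ∂P) *
                ENNReal.ofReal (K * R x) := ENNReal.tsum_mul_right
          _ ≤ (∫⁻ ω in {ω | S < Θ ω}, ENNReal.ofReal (Θ ω ^ p) ∂P) *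
                ENNReal.ofReal (K * R x) := by
              refine mul_le_mul_left ?_ _
              rw [← lintegral_iUnion (fun k => hΘm (hAmeas k)) hdisj]
              exact lintegral_mono_set hUnion

set_option maxHeartbeats 1600000 in
/-- Lemma 4.3: if `(X₁,X₂)` and `(Θ₁,Θ₂)` are independent random vectors with positive
coordinates, `X₁, X₂` identically distributed and asymptotically independent with common
tail dominated by a bounded regularly varying function `R` of index `-α` that stays bounded
away from `0` on bounded intervals, and `Θ₁, Θ₂` have finite `(α+ε)`-th moments, then
`P[Θ₁X₁ > x, Θ₂X₂ > x]/R(x) → 0` as `x → ∞`. -/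
theorem stmt1 {Ω : Type*} [MeasurableSpace Ω] (P : Measure Ω) [IsProbabilityMeasure P]
    (X₁ X₂ Θ₁ Θ₂ : Ω → ℝ) (α ε : ℝ) (R : ℝ → ℝ)
    (hX₁m : Measurable X₁) (hX₂m : Measurable X₂)
    (hΘ₁m : Measurable Θ₁) (hΘ₂m : Measurable Θ₂)
    (hpos : ∀ᵐ ω ∂P, 0 < X₁ ω ∧ 0 < X₂ ω ∧ 0 < Θ₁ ω ∧ 0 < Θ₂ ω)
    (hident : IdentDistrib X₁ X₂ P P)
    (hasymp : AsympIndep P X₁ X₂)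
    (hindep : IndepFun (fun ω => (X₁ ω, X₂ ω)) (fun ω => (Θ₁ ω, Θ₂ ω)) P)
    (hα : 0 < α) (hε : 0 < ε)
    (hRrv : RegVarying R (-α))
    (hRbdd : ∃ C : ℝ, ∀ x : ℝ, 0 < x → R x ≤ C)
    (hRaway : ∀ M : ℝ, 0 < M → ∃ c : ℝ, 0 < c ∧ ∀ x : ℝ, 0 < x → x ≤ M → c ≤ R x)
    (hdom : ∀ x : ℝ, 0 < x → (P {ω | x < X₁ ω}).toReal ≤ R x)
    (hmom₁ : momE P Θ₁ (α + ε) ≠ ⊤) (hmom₂ : momE P Θ₂ (α + ε) ≠ ⊤) :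
    Tendsto (fun x : ℝ =>
        (P {ω | x < Θ₁ ω * X₁ ω ∧ x < Θ₂ ω * X₂ ω}).toReal / R x)
      atTop (nhds 0) := by
  classical
  set p := α + ε with hpdef
  have hp : 0 < p := by positivity
  have hRpos := hRrv.1
  have hX₁Θ₁ : IndepFun X₁ Θ₁ P := hindep.comp measurable_fst measurable_fst
  have hX₂Θ₂ : IndepFun X₂ Θ₂ P := hindep.comp measurable_snd measurable_snd
  -- tail bounds in `ℝ≥0∞`
  have htail₁ : ∀ y : ℝ, 0 < y → P {ω | y < X₁ ω} ≤ ENNReal.ofReal (R y) := fun y hy =>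
    (ENNReal.le_ofReal_iff_toReal_le (measure_ne_top P _) (hRpos y hy).le).2 (hdom y hy)
  have htail₂ : ∀ y : ℝ, 0 < y → P {ω | y < X₂ ω} ≤ ENNReal.ofReal (R y) := by
    intro y hy
    have h1 : P (X₁ ⁻¹' Set.Ioi y) = P (X₂ ⁻¹' Set.Ioi y) :=
      hident.measure_mem_eq measurableSet_Ioi
    have h2 : P {ω | y < X₂ ω} = P {ω | y < X₁ ω} := h1.symm
    rw [h2]; exact htail₁ y hy
  -- one-step chaining for `R`
  set K := (2:ℝ) ^ p with hKdef
  have hK0 : 0 < K := Real.rpow_pos_of_pos two_pos p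
  have hKα : (2:ℝ) ^ α < K := by
    rw [hKdef, hpdef]
    exact (Real.rpow_lt_rpow_left_iff (by norm_num)).2 (by linarith)
  have hlim2 : Tendsto (fun x => R (2⁻¹ * x) / R x) atTop (nhds ((2:ℝ) ^ α)) := by
    have h := hRrv.2 2⁻¹ (by norm_num)
    have heq : ((2:ℝ)⁻¹) ^ (-α) = (2:ℝ) ^ α := by
      rw [Real.inv_rpow (by norm_num), ← Real.rpow_neg (by norm_num), neg_neg]
    rwa [heq] at h
  obtain ⟨x₀, hx₀⟩ := eventually_atTop.1 (hlim2.eventually_lt_const hKα)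
  set x₁ := max x₀ 1 with hx₁def
  have hx₁1 : (1:ℝ) ≤ x₁ := le_max_right _ _
  have hx₁0 : (0:ℝ) < x₁ := lt_of_lt_of_le one_pos hx₁1
  have hchain0 : ∀ y : ℝ, x₁ ≤ y → R (y / 2) ≤ K * R y := by
    intro y hy
    have hy0 : 0 < y := lt_of_lt_of_le one_pos (le_trans hx₁1 hy)
    have h := hx₀ y (le_trans (le_max_left _ _) hy)
    rw [div_lt_iff₀ (hRpos y hy0)] at h
    have heq : y / 2 = 2⁻¹ * y := by ring
    rw [heq]
    exact h.le
  have hchain := chain_iter (le_of_lt hx₁0) hK0.le hchain0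
  -- lower bound for `R`
  obtain ⟨c, hc, hcR⟩ := hRaway (2 * x₁) (by positivity)
  have hAbnd : ∀ x : ℝ, x₁ ≤ x → c ≤ (x / x₁) ^ p * R x := by
    intro x hx
    have hx0 : 0 < x := lt_of_lt_of_le hx₁0 hx
    obtain ⟨k, hk1, hk2⟩ := exists_dyadic (x / x₁) ((one_le_div hx₁0).2 hx)
    have hy : x₁ * 2 ^ k ≤ x := by
      rw [mul_comm]; exact (le_div_iff₀ hx₁0).1 hk1
    have h1 : R (x / 2 ^ k) ≤ K ^ k * R x := hchain k x hy
    have h2 : c ≤ R (x / 2 ^ k) := by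
      refine hcR _ (by positivity) ?_
      rw [div_le_iff₀ (by positivity : (0:ℝ) < 2 ^ k)]
      have h3 : x < 2 ^ (k+1) * x₁ := by
        have := (div_lt_iff₀ hx₁0).1 hk2
        linarith
      have h4 : (2:ℝ) ^ (k+1) * x₁ = 2 * x₁ * 2 ^ k := by ring
      linarith
    have h3 : K ^ k ≤ (x / x₁) ^ p := by
      rw [hKdef, rpow_pow_comm 2 p (by norm_num) k]
      exact Real.rpow_le_rpow (by positivity) hk1 hp.le
    calc c ≤ R (x / 2 ^ k) := h2
      _ ≤ K ^ k * R x := h1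
      _ ≤ (x / x₁) ^ p * R x := mul_le_mul_of_nonneg_right h3 (hRpos x hx0).le
  -- truncated moments
  set m₁ : ℝ → ℝ≥0∞ := fun u => ∫⁻ ω in {ω | u < Θ₁ ω}, ENNReal.ofReal (Θ₁ ω ^ p) ∂P with hm₁
  set m₂ : ℝ → ℝ≥0∞ := fun u => ∫⁻ ω in {ω | u < Θ₂ ω}, ENNReal.ofReal (Θ₂ ω ^ p) ∂P with hm₂
  have hm₁t : Tendsto (fun n : ℕ => m₁ n) atTop (nhds 0) :=
    tail_mom_tendsto P Θ₁ hΘ₁m p hp.le hmom₁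
  have hm₂t : Tendsto (fun n : ℕ => m₂ n) atTop (nhds 0) :=
    tail_mom_tendsto P Θ₂ hΘ₂m p hp.le hmom₂
  -- main limit
  rw [NormedAddCommGroup.tendsto_nhds_zero]
  intro δ hδ
  set c₂ := K / c with hc₂def
  have hc₂ : 0 < c₂ := by positivity
  set η := min (δ / (8 * K)) (δ / (8 * c₂)) with hηdef
  have hη0 : 0 < η := lt_min (by positivity) (by positivity)
  obtain ⟨n₀, hn₁, hn₂⟩ :=
    ((hm₁t.eventually_lt_const (ENNReal.ofReal_pos.2 hη0)).and
      (hm₂t.eventually_lt_const (ENNReal.ofReal_pos.2 hη0))).exists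
  set S := max (n₀ : ℝ) 1 with hSdef
  have hS1 : (1:ℝ) ≤ S := le_max_right _ _
  have hS0 : (0:ℝ) < S := lt_of_lt_of_le one_pos hS1
  have hnS : ((n₀:ℕ):ℝ) ≤ S := le_max_left _ _
  have hmS₁ : m₁ S ≤ ENNReal.ofReal η :=
    le_trans (lintegral_mono_set fun ω hω => lt_of_le_of_lt hnS hω) hn₁.le
  have hmS₂ : m₂ S ≤ ENNReal.ofReal η :=
    le_trans (lintegral_mono_set fun ω hω => lt_of_le_of_lt hnS hω) hn₂.le
  set L := (S⁻¹ : ℝ) ^ (-α) with hLdef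
  have hL0 : 0 < L := Real.rpow_pos_of_pos (inv_pos.2 hS0) _
  set b₁ := δ / (8 * (L + 1)) with hb₁def
  have hb₁0 : 0 < b₁ := by positivity
  have hE1 : ∀ᶠ x : ℝ in atTop,
      (P {ω | x / S < X₁ ω ∧ x / S < X₂ ω}).toReal /
        (P {ω | x / S < X₁ ω}).toReal < b₁ := by
    have hcomp := (hasymp.1).comp (tendsto_id.atTop_div_const hS0)
    exact hcomp.eventually_lt_const hb₁0
  have hE2 : ∀ᶠ x : ℝ in atTop, R (S⁻¹ * x) / R x < L + 1 :=
    (hRrv.2 S⁻¹ (inv_pos.2 hS0)).eventually_lt_const (by linarith)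
  filter_upwards [hE1, hE2, eventually_ge_atTop (2 * x₁),
    eventually_ge_atTop (2 * x₁ * n₀), eventually_gt_atTop (0:ℝ)]
    with x hx1 hx2 hx2x₁ hxn hx0
  -- setup
  have hxx₁ : x₁ ≤ x := by linarith
  have hRx : 0 < R x := hRpos x hx0
  set t := δ / 8 * R x with htdef
  have ht0 : 0 ≤ t := by positivity
  -- Term 1
  have hT1 : P {ω | x / S < X₁ ω ∧ x / S < X₂ ω} ≤ ENNReal.ofReal t := by
    have hy0 : 0 < x / S := div_pos hx0 hS0
    set a := P {ω | x / S < X₁ ω ∧ x / S < X₂ ω} with hadef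
    set b := P {ω | x / S < X₁ ω} with hbdef
    by_cases hb : b = 0
    · have ha0 : a = 0 := le_antisymm
        (le_trans (measure_mono fun ω hω => hω.1) (le_of_eq hb)) zero_le
      rw [ha0]; exact zero_le
    · have hbt : b ≠ ⊤ := measure_ne_top P _
      have hbpos : 0 < b.toReal := ENNReal.toReal_pos hb hbt
      have hhy : a.toReal / b.toReal < b₁ := hx1
      have key : a.toReal ≤ b₁ * R (x / S) := by
        have h1 : a.toReal = a.toReal / b.toReal * b.toReal := by
          field_simp
        rw [h1]
        exact mul_le_mul hhy.le (hdom _ hy0) ENNReal.toReal_nonneg hb₁0.le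
      have key2 : b₁ * R (x / S) ≤ t := by
        have h3 : R (x / S) ≤ (L + 1) * R x := by
          rw [div_lt_iff₀ hRx] at hx2
          have heq : x / S = S⁻¹ * x := by
            rw [div_eq_inv_mul]
          rw [heq]
          exact hx2.le
        have hL1 : (0:ℝ) < L + 1 := by linarith
        calc b₁ * R (x / S) ≤ b₁ * ((L + 1) * R x) :=
              mul_le_mul_of_nonneg_left h3 hb₁0.le
          _ = t := by
              rw [htdef, hb₁def]
              field_simp
      exact (ENNReal.le_ofReal_iff_toReal_le (measure_ne_top P _) ht0).2 (key.trans key2)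
  -- Terms 2 and 3 (one for each pair)
  have hmain2 : ∀ (X Θ : Ω → ℝ), Measurable X → Measurable Θ → IndepFun X Θ P →
      (∀ y : ℝ, 0 < y → P {ω | y < X ω} ≤ ENNReal.ofReal (R y)) →
      ((∫⁻ ω in {ω | S < Θ ω}, ENNReal.ofReal (Θ ω ^ p) ∂P) ≤ ENNReal.ofReal η) →
      ((∫⁻ ω in {ω | x / (2 * x₁) < Θ ω}, ENNReal.ofReal (Θ ω ^ p) ∂P) ≤ ENNReal.ofReal η) →
      P {ω | S < Θ ω ∧ x < Θ ω * X ω} ≤ ENNReal.ofReal t + ENNReal.ofReal t := by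
    intro X Θ hXm hΘm hind htail hmS hmU
    have hbase := T2bound P X Θ R hXm hΘm hind p x₁ hp hx₁1 hchain htail S x hS1 hx0 hRx.le
    refine le_trans hbase (add_le_add ?_ ?_)
    · -- main dyadic part
      calc (∫⁻ ω in {ω | S < Θ ω}, ENNReal.ofReal (Θ ω ^ p) ∂P) * ENNReal.ofReal (K * R x)
          ≤ ENNReal.ofReal η * ENNReal.ofReal (K * R x) := mul_le_mul_left hmS _
        _ ≤ ENNReal.ofReal (δ / (8 * K)) * ENNReal.ofReal (K * R x) :=
            mul_le_mul_left (ENNReal.ofReal_le_ofReal (min_le_left _ _)) _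
        _ = ENNReal.ofReal (δ / (8 * K) * (K * R x)) :=
            (ENNReal.ofReal_mul (by positivity)).symm
        _ ≤ ENNReal.ofReal t := by
            refine ENNReal.ofReal_le_ofReal (le_of_eq ?_)
            rw [htdef]
            field_simp
    · -- overflow part
      set U := x / (2 * x₁) with hUdef
      have hUpos : 0 < U := by positivity
      have hUp : 0 < U ^ p := Real.rpow_pos_of_pos hUpos p
      have hmar := markov_set P Θ hΘm hp.le hUpos (measurableSet_Ioi (a := U))
        Set.Ioi_subset_Ici_self
      have hsetEq : Θ ⁻¹' Set.Ioi U = {ω | U < Θ ω} := rfl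
      rw [hsetEq] at hmar
      have h1 : P {ω | U < Θ ω} ≤
          (∫⁻ ω in {ω | U < Θ ω}, ENNReal.ofReal (Θ ω ^ p) ∂P) / ENNReal.ofReal (U ^ p) :=
        (ENNReal.le_div_iff_mul_le
          (Or.inl (ne_of_gt (ENNReal.ofReal_pos.2 hUp))) (Or.inl ENNReal.ofReal_ne_top)).2 hmar
      have h3 : (U ^ p)⁻¹ ≤ c₂ * R x := by
        have hU2 : U ^ p = (x / x₁) ^ p / K := by
          have heq : U = x / x₁ / 2 := by
            rw [hUdef, div_div, mul_comm]
          rw [heq, Real.div_rpow (by positivity) (by norm_num), hKdef]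
        have hxx₁p : 0 < (x / x₁) ^ p := Real.rpow_pos_of_pos (by positivity) p
        rw [hU2, inv_div, div_le_iff₀ hxx₁p]
        have hAx := hAbnd x hxx₁
        calc K = K / c * c := by field_simp
          _ ≤ K / c * ((x / x₁) ^ p * R x) :=
              mul_le_mul_of_nonneg_left hAx (by positivity)
          _ = c₂ * R x * (x / x₁) ^ p := by rw [hc₂def]; ring
      calc P {ω | U < Θ ω}
          ≤ (∫⁻ ω in {ω | U < Θ ω}, ENNReal.ofReal (Θ ω ^ p) ∂P) / ENNReal.ofReal (U ^ p) := h1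
        _ = (∫⁻ ω in {ω | U < Θ ω}, ENNReal.ofReal (Θ ω ^ p) ∂P) *
              ENNReal.ofReal ((U ^ p)⁻¹) := by
            rw [div_eq_mul_inv, ENNReal.ofReal_inv_of_pos hUp]
        _ ≤ ENNReal.ofReal η * ENNReal.ofReal (c₂ * R x) :=
            mul_le_mul' hmU (ENNReal.ofReal_le_ofReal h3)
        _ ≤ ENNReal.ofReal (δ / (8 * c₂)) * ENNReal.ofReal (c₂ * R x) :=
            mul_le_mul_left (ENNReal.ofReal_le_ofReal (min_le_right _ _)) _
        _ = ENNReal.ofReal (δ / (8 * c₂) * (c₂ * R x)) :=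
            (ENNReal.ofReal_mul (by positivity)).symm
        _ ≤ ENNReal.ofReal t := by
            refine ENNReal.ofReal_le_ofReal (le_of_eq ?_)
            rw [htdef]
            field_simp
  -- the `U`-truncated moments are small
  have hUn : (n₀ : ℝ) ≤ x / (2 * x₁) := by
    rw [le_div_iff₀ (by positivity)]
    linarith [hxn]
  have hmU₁ : m₁ (x / (2 * x₁)) ≤ ENNReal.ofReal η :=
    le_trans (lintegral_mono_set fun ω hω => lt_of_le_of_lt hUn hω) hn₁.le
  have hmU₂ : m₂ (x / (2 * x₁)) ≤ ENNReal.ofReal η :=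
    le_trans (lintegral_mono_set fun ω hω => lt_of_le_of_lt hUn hω) hn₂.le
  have hT2 := hmain2 X₁ Θ₁ hX₁m hΘ₁m hX₁Θ₁ htail₁ hmS₁ hmU₁
  have hT3 := hmain2 X₂ Θ₂ hX₂m hΘ₂m hX₂Θ₂ htail₂ hmS₂ hmU₂
  -- decomposition
  have hdecomp : P {ω | x < Θ₁ ω * X₁ ω ∧ x < Θ₂ ω * X₂ ω} ≤
      P {ω | x / S < X₁ ω ∧ x / S < X₂ ω} +
        (P {ω | S < Θ₁ ω ∧ x < Θ₁ ω * X₁ ω} + P {ω | S < Θ₂ ω ∧ x < Θ₂ ω * X₂ ω}) := by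
    have hincl : ({ω | x < Θ₁ ω * X₁ ω ∧ x < Θ₂ ω * X₂ ω} : Set Ω) ≤ᵐ[P]
        (({ω | x / S < X₁ ω ∧ x / S < X₂ ω} ∪
          ({ω | S < Θ₁ ω ∧ x < Θ₁ ω * X₁ ω} ∪ {ω | S < Θ₂ ω ∧ x < Θ₂ ω * X₂ ω})) : Set Ω) := by
      filter_upwards [hpos] with ω hω
      intro hmem
      obtain ⟨hX₁p, hX₂p, hΘ₁p, hΘ₂p⟩ := hω
      obtain ⟨h1, h2⟩ := hmem
      by_cases hc1 : S < Θ₁ ω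
      · exact Or.inr (Or.inl ⟨hc1, h1⟩)
      by_cases hc2 : S < Θ₂ ω
      · exact Or.inr (Or.inr ⟨hc2, h2⟩)
      push_neg at hc1 hc2
      left
      constructor
      · have ha : x / Θ₁ ω < X₁ ω := (div_lt_iff₀ hΘ₁p).2 (by linarith [mul_comm (Θ₁ ω) (X₁ ω)])
        exact lt_of_le_of_lt (div_le_div_of_nonneg_left hx0.le hΘ₁p hc1) ha
      · have ha : x / Θ₂ ω < X₂ ω := (div_lt_iff₀ hΘ₂p).2 (by linarith [mul_comm (Θ₂ ω) (X₂ ω)])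
        exact lt_of_le_of_lt (div_le_div_of_nonneg_left hx0.le hΘ₂p hc2) ha
    calc P {ω | x < Θ₁ ω * X₁ ω ∧ x < Θ₂ ω * X₂ ω}
        ≤ P ({ω | x / S < X₁ ω ∧ x / S < X₂ ω} ∪
            ({ω | S < Θ₁ ω ∧ x < Θ₁ ω * X₁ ω} ∪ {ω | S < Θ₂ ω ∧ x < Θ₂ ω * X₂ ω})) :=
          measure_mono_ae hincl
      _ ≤ P {ω | x / S < X₁ ω ∧ x / S < X₂ ω} +
            P ({ω | S < Θ₁ ω ∧ x < Θ₁ ω * X₁ ω} ∪ {ω | S < Θ₂ ω ∧ x < Θ₂ ω * X₂ ω}) :=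
          measure_union_le _ _
      _ ≤ _ := add_le_add_right (measure_union_le _ _) _
  -- combine
  have ht20 : 0 ≤ t + t := by positivity
  have ht40 : 0 ≤ (t + t) + (t + t) := by positivity
  have hfinal : P {ω | x < Θ₁ ω * X₁ ω ∧ x < Θ₂ ω * X₂ ω} ≤
      ENNReal.ofReal (t + ((t + t) + (t + t))) := by
    calc P {ω | x < Θ₁ ω * X₁ ω ∧ x < Θ₂ ω * X₂ ω}
        ≤ P {ω | x / S < X₁ ω ∧ x / S < X₂ ω} +
          (P {ω | S < Θ₁ ω ∧ x < Θ₁ ω * X₁ ω} + P {ω | S < Θ₂ ω ∧ x < Θ₂ ω * X₂ ω}) := hdecomp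
      _ ≤ ENNReal.ofReal t +
            ((ENNReal.ofReal t + ENNReal.ofReal t) + (ENNReal.ofReal t + ENNReal.ofReal t)) :=
          add_le_add hT1 (add_le_add hT2 hT3)
      _ = ENNReal.ofReal (t + ((t + t) + (t + t))) := by
          rw [ENNReal.ofReal_add ht0 ht40, ENNReal.ofReal_add ht20 ht20,
            ENNReal.ofReal_add ht0 ht0]
  have hnum := ENNReal.toReal_le_of_le_ofReal (by positivity) hfinal
  have hq : (P {ω | x < Θ₁ ω * X₁ ω ∧ x < Θ₂ ω * X₂ ω}).toReal / R x ≤ 5 * (δ / 8) := by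
    rw [div_le_iff₀ hRx]
    calc (P {ω | x < Θ₁ ω * X₁ ω ∧ x < Θ₂ ω * X₂ ω}).toReal
        ≤ t + ((t + t) + (t + t)) := hnum
      _ = 5 * (δ / 8) * R x := by rw [htdef]; ring
  rw [Real.norm_eq_abs, abs_of_nonneg (div_nonneg ENNReal.toReal_nonneg hRx.le)]
  linarith
end
end

section
/- Let p be a nonnegative integer and μ a probability measure in M_p. Then z⁻¹ = o(r_G(z)) as z→∞ non-tangentially; that is, for every η>0, |z·r_G(z)| → ∞ as |z|→∞ with z ∈ Γ_{η,M} (M arbitrary). -/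
open MeasureTheory Filter Topology
open scoped ENNReal

noncomputable section

/-- `μ ∈ M_p`: a Borel probability measure on `[0,∞)` with finite `p`-th moment and
infinite `(p+1)`-th moment. -/
def MemMp (μ : Measure ℝ) (p : ℕ) : Prop :=
  IsProbabilityMeasure μ ∧ μ (Set.Iio 0) = 0 ∧
    (∫⁻ t, ENNReal.ofReal (t ^ p) ∂μ) ≠ ⊤ ∧ (∫⁻ t, ENNReal.ofReal (t ^ (p + 1)) ∂μ) = ⊤

/-- The remainder term in the Laurent series expansion of the Cauchy transform of `μ`:
`r_G(z) = ∫₀^∞ t^{p+1} (z − t)⁻¹ dμ(t)`. -/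
def rG (μ : Measure ℝ) (p : ℕ) (z : ℂ) : ℂ :=
  ∫ t : ℝ, (t : ℂ) ^ (p + 1) / (z - (t : ℂ)) ∂μ

namespace Stmt15Aux

lemma ae_nn (μ : Measure ℝ) (h : μ (Set.Iio 0) = 0) : ∀ᵐ t ∂μ, 0 ≤ t := by
  rw [ae_iff]
  convert h using 2
  ext t; simp

lemma frac_mono (t : ℝ) {a b : ℝ} (ha : 0 < a) (hab : a ≤ b) :
    a^2/(2*(a^2+t^2)) ≤ b^2/(2*(b^2+t^2)) := by
  have hb : 0 < b := lt_of_lt_of_le ha hab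
  rw [div_le_div_iff₀ (by positivity) (by positivity)]
  nlinarith [sq_nonneg t, mul_le_mul hab hab ha.le hb.le]

lemma sub_ne (z : ℂ) (hz : 0 < z.im) (t : ℝ) : z - (t:ℂ) ≠ 0 := by
  intro h
  have : (z - (t:ℂ)).im = 0 := by rw [h]; simp
  simp [Complex.sub_im] at this
  linarith

/-- The key pointwise identity. -/
lemma pointwise_id (z : ℂ) (hz : 0 < z.im) (t : ℝ) (p : ℕ) :
    (z * ((t:ℂ) ^ (p+1) / (z - t))).re - (z.re / z.im) * (z * ((t:ℂ) ^ (p+1) / (z - t))).im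
      = t ^ (p+1) * ((z.re^2 + z.im^2) / Complex.normSq (z - t)) := by
  have hzt : (z - (t:ℂ)) ≠ 0 := sub_ne z hz t
  have hN : Complex.normSq (z - t) ≠ 0 := by
    simpa using (Complex.normSq_pos.2 hzt).ne'
  have h1 : (z * ((t:ℂ) ^ (p+1) / (z - t))) = ((t:ℝ)^(p+1) : ℝ) * (z / (z - t)) := by
    push_cast
    ring
  rw [h1]
  rw [Complex.re_ofReal_mul, Complex.im_ofReal_mul, Complex.div_re, Complex.div_im]
  have hNv : Complex.normSq (z - t) = (z.re - t)^2 + z.im^2 := by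
    simp [Complex.normSq_apply, Complex.sub_re, Complex.sub_im]; ring
  rw [hNv] at hN ⊢
  simp only [Complex.sub_re, Complex.sub_im, Complex.ofReal_re, Complex.ofReal_im]
  field_simp
  ring

lemma int_pow (μ : Measure ℝ) (p : ℕ) [IsProbabilityMeasure μ] (h0 : μ (Set.Iio 0) = 0)
    (hfin : (∫⁻ t, ENNReal.ofReal (t ^ p) ∂μ) ≠ ⊤) :
    Integrable (fun t : ℝ => t ^ p) μ := by
  refine ⟨(continuous_pow p).aestronglyMeasurable, ?_⟩
  rw [HasFiniteIntegral]
  have : (∫⁻ t, ‖t ^ p‖ₑ ∂μ) = ∫⁻ t, ENNReal.ofReal (t ^ p) ∂μ := by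
    refine lintegral_congr_ae ((ae_nn μ h0).mono fun t ht => ?_)
    simp only []
    rw [Real.enorm_eq_ofReal_abs, abs_of_nonneg (pow_nonneg ht p)]
  rw [this]
  exact lt_top_iff_ne_top.2 hfin

lemma integrable_f (μ : Measure ℝ) (p : ℕ) [IsProbabilityMeasure μ] (h0 : μ (Set.Iio 0) = 0)
    (hfin : (∫⁻ t, ENNReal.ofReal (t ^ p) ∂μ) ≠ ⊤) (z : ℂ) (hz : 0 < z.im) :
    Integrable (fun t : ℝ => (t:ℂ) ^ (p+1) / (z - t)) μ := by
  have hzt : ∀ t : ℝ, (z - (t:ℂ)) ≠ 0 := sub_ne z hz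
  have hcont : Continuous (fun t : ℝ => (t:ℂ) ^ (p+1) / (z - t)) := by
    exact (Continuous.pow (Complex.continuous_ofReal) _).div
      (continuous_const.sub Complex.continuous_ofReal) hzt
  refine Integrable.mono' (g := fun t => (2 * ‖z‖) ^ (p+1) / z.im + 2 * t ^ p)
    ((integrable_const _).add ((int_pow μ p h0 hfin).const_mul 2))
    hcont.aestronglyMeasurable ?_
  refine (ae_nn μ h0).mono fun t ht => ?_
  have habs : ‖(t:ℂ) ^ (p+1) / (z - t)‖ = t ^ (p+1) / ‖z - t‖ := by
    rw [norm_div, norm_pow]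
    simp [Complex.norm_real, Real.norm_eq_abs, abs_of_nonneg ht]
  rw [habs]
  have him : z.im ≤ ‖z - t‖ := by
    have := Complex.abs_im_le_norm (z - t)
    rw [Complex.sub_im] at this
    simpa [abs_of_pos hz] using this
  have hzabs : 0 ≤ ‖z‖ := norm_nonneg z
  rcases le_or_gt t (2 * ‖z‖) with hc | hc
  · have h1 : t ^ (p+1) / ‖z - t‖ ≤ (2 * ‖z‖) ^ (p+1) / z.im := by
      apply div_le_div₀ (by positivity) (pow_le_pow_left₀ ht hc _) hz him
    have h2 : (0:ℝ) ≤ 2 * t ^ p := by positivity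
    linarith
  · have hza : ‖z‖ ≤ t / 2 := by linarith
    have ht2 : 0 < t := by
      have : 0 ≤ 2 * ‖z‖ := by positivity
      linarith
    have hre : t - ‖z‖ ≤ ‖z - t‖ := by
      have h1 : ‖(t:ℂ)‖ - ‖z‖ ≤ ‖(t:ℂ) - z‖ := by
        simpa using norm_sub_norm_le (t:ℂ) z
      have h2 : ‖(t:ℂ) - z‖ = ‖z - t‖ := by
        rw [norm_sub_rev]
      rw [h2] at h1
      simpa [Complex.norm_real, Real.norm_eq_abs, abs_of_nonneg ht] using h1
    have hhalf : t / 2 ≤ ‖z - t‖ := by linarith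
    have h1 : t ^ (p+1) / ‖z - t‖ ≤ t ^ (p+1) / (t / 2) := by
      apply div_le_div_of_nonneg_left (by positivity) (by positivity) hhalf
    have h2 : t ^ (p+1) / (t / 2) = 2 * t ^ p := by
      field_simp [ht2.ne']
      ring
    have h3 : (0:ℝ) ≤ (2 * ‖z‖) ^ (p+1) / z.im := by positivity
    rw [h2] at h1
    linarith

lemma mct (μ : Measure ℝ) (p : ℕ) (h0 : μ (Set.Iio 0) = 0)
    (hinf : (∫⁻ t, ENNReal.ofReal (t ^ (p + 1)) ∂μ) = ⊤) (C : ℝ) :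
    ∃ n : ℕ, 1 ≤ (n:ℝ) ∧
      ENNReal.ofReal C ≤ ∫⁻ t, ENNReal.ofReal (t^(p+1) * ((n:ℝ)^2/(2*((n:ℝ)^2+t^2)))) ∂μ := by
  set f : ℕ → ℝ → ℝ≥0∞ := fun n t =>
    ENNReal.ofReal (t^(p+1) * (((n:ℝ)+1)^2/(2*(((n:ℝ)+1)^2+t^2))))
  set F : ℝ → ℝ≥0∞ := fun t => ENNReal.ofReal (t^(p+1) * (1/2))
  have hFtop : (∫⁻ t, F t ∂μ) = ⊤ := by
    have : ∀ t : ℝ, F t = ENNReal.ofReal (1/2) * ENNReal.ofReal (t^(p+1)) := by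
      intro t
      simp only [F]
      rw [← ENNReal.ofReal_mul (by norm_num)]
      congr 1
      ring
    simp only [this]
    rw [lintegral_const_mul' _ _ (by simp)]
    rw [hinf, ENNReal.mul_top (by simp)]
  have hmeas : ∀ n, AEMeasurable (f n) μ := by
    intro n
    apply (ENNReal.measurable_ofReal.comp ?_).aemeasurable
    have hd : ∀ t : ℝ, 2*(((n:ℝ)+1)^2+t^2) ≠ 0 := fun t => by positivity
    exact ((continuous_pow (p+1)).mul ((continuous_const).div
      (continuous_const.mul (continuous_const.add (continuous_pow 2))) hd)).measurable
  have hmono : ∀ᵐ t ∂μ, Monotone fun n => f n t := by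
    refine (ae_nn μ h0).mono fun t ht => ?_
    intro n m hnm
    apply ENNReal.ofReal_le_ofReal
    apply mul_le_mul_of_nonneg_left _ (pow_nonneg ht _)
    exact frac_mono t (by positivity)
      (by have := (Nat.cast_le (α := ℝ)).2 hnm; linarith)
  have htend : ∀ᵐ t ∂μ, Tendsto (fun n => f n t) atTop (𝓝 (F t)) := by
    refine (ae_nn μ h0).mono fun t ht => ?_
    apply (ENNReal.continuous_ofReal.tendsto _).comp
    have key : Tendsto (fun x : ℝ => x^2/(2*(x^2+t^2))) atTop (𝓝 (1/2)) := by
      have h1 : Tendsto (fun x : ℝ => 2*(1+t^2/x^2)) atTop (𝓝 (2*(1+0))) := by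
        apply Tendsto.const_mul
        apply Tendsto.const_add
        simpa [div_eq_mul_inv] using
          ((tendsto_pow_atTop (two_ne_zero)).inv_tendsto_atTop (α := ℝ)).const_mul (t^2)
      have h2 : Tendsto (fun x : ℝ => (2*(1+t^2/x^2))⁻¹) atTop (𝓝 ((2*(1+0)))⁻¹) :=
        h1.inv₀ (by norm_num)
      rw [show ((2:ℝ)*(1+0))⁻¹ = 1/2 by norm_num] at h2
      apply h2.congr'
      filter_upwards [eventually_ge_atTop (1:ℝ)] with x hx
      have hx0 : x ≠ 0 := by linarith
      field_simp
    have key2 : Tendsto (fun n : ℕ => ((n:ℝ)+1)^2/(2*(((n:ℝ)+1)^2+t^2))) atTop (𝓝 (1/2)) :=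
      key.comp (tendsto_atTop_add_const_right _ 1 tendsto_natCast_atTop_atTop)
    simpa using key2.const_mul (t^(p+1))
  have H := lintegral_tendsto_of_tendsto_of_monotone hmeas hmono htend
  rw [hFtop] at H
  have : ∀ᶠ n : ℕ in atTop, ENNReal.ofReal C < ∫⁻ t, f n t ∂μ :=
    H.eventually (eventually_gt_nhds (by simp [ENNReal.ofReal_lt_top]))
  obtain ⟨n, hn⟩ := this.exists
  exact ⟨n+1, by push_cast; linarith, by push_cast; exact hn.le⟩

/-- Pointwise lower bound. -/
lemma plb (z : ℂ) (hz : 0 < z.im) (t : ℝ) (ht : 0 ≤ t) (p : ℕ) {a : ℝ} (ha : 0 < a)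
    (haR : a ≤ ‖z‖) :
    t^(p+1) * (a^2/(2*(a^2+t^2))) ≤ t^(p+1) * ((z.re^2 + z.im^2) / Complex.normSq (z - t)) := by
  apply mul_le_mul_of_nonneg_left _ (pow_nonneg ht _)
  have hR2 : (‖z‖)^2 = z.re^2 + z.im^2 := by
    rw [Complex.sq_norm, Complex.normSq_apply]; ring
  have hNv : Complex.normSq (z - t) = (z.re - t)^2 + z.im^2 := by
    simp [Complex.normSq_apply, Complex.sub_re, Complex.sub_im]; ring
  have hN0 : 0 < Complex.normSq (z - t) := by rw [hNv]; positivity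
  have hNle : Complex.normSq (z - t) ≤ 2 * ((z.re^2 + z.im^2) + t^2) := by
    rw [hNv]; nlinarith [sq_nonneg (z.re + t)]
  calc a^2/(2*(a^2+t^2)) ≤ (‖z‖)^2/(2*((‖z‖)^2+t^2)) :=
        frac_mono t ha haR
    _ = (z.re^2 + z.im^2)/(2*((z.re^2 + z.im^2)+t^2)) := by rw [hR2]
    _ ≤ (z.re^2 + z.im^2) / Complex.normSq (z - t) := by
        apply div_le_div_of_nonneg_left (by nlinarith) hN0 hNle

end Stmt15Aux

open Stmt15Aux in
/-- Proposition (lower bound for `r_G`): if `μ ∈ M_p`, then `z⁻¹ = o(r_G(z))` as `z → ∞`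
non-tangentially, i.e. for every `η > 0`, `|z·r_G(z)| → ∞` as `|z| → ∞` within the cone
`Γ_η = {z : 0 < Im z, |Re z| < η Im z}`. -/
theorem stmt15 (μ : Measure ℝ) (p : ℕ) (hμ : MemMp μ p) :
    ∀ η : ℝ, 0 < η →
      Tendsto (fun z : ℂ => ‖z * rG μ p z‖)
        (Filter.comap (fun z : ℂ => ‖z‖) atTop ⊓
          Filter.principal {z : ℂ | 0 < z.im ∧ |z.re| < η * z.im})
        atTop := by
  obtain ⟨hprob, h0, hfin, hinf⟩ := hμ
  intro η hη
  rw [tendsto_atTop]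
  intro b
  have hηpos : (0:ℝ) < 1 + η := by linarith
  set C : ℝ := max b 0 * (1 + η) with hC
  have hC0 : 0 ≤ C := by positivity
  obtain ⟨n, hn1, hnS⟩ := mct μ p h0 hinf C
  rw [eventually_inf_principal]
  have hev : ∀ᶠ z : ℂ in comap (fun z : ℂ => ‖z‖) atTop, (n:ℝ) ≤ ‖z‖ :=
    eventually_comap.2 ((eventually_ge_atTop (n:ℝ)).mono fun r hr z hz => hz ▸ hr)
  filter_upwards [hev] with z hzR hzcone
  obtain ⟨hy, hx⟩ := hzcone
  -- notation
  set w := z * rG μ p z with hwdef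
  have hf : Integrable (fun t : ℝ => (t:ℂ) ^ (p+1) / (z - t)) μ := integrable_f μ p h0 hfin z hy
  have hzf : Integrable (fun t : ℝ => z * ((t:ℂ) ^ (p+1) / (z - t))) μ := hf.const_mul z
  have hw : w = ∫ t : ℝ, z * ((t:ℂ) ^ (p+1) / (z - t)) ∂μ := by
    rw [hwdef, rG]
    simp_rw [← smul_eq_mul]
    rw [integral_smul]
  -- real and imaginary parts
  have hre : ∫ t : ℝ, (z * ((t:ℂ) ^ (p+1) / (z - t))).re ∂μ = w.re := by
    rw [hw]; exact integral_re hzf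
  have him : ∫ t : ℝ, (z * ((t:ℂ) ^ (p+1) / (z - t))).im ∂μ = w.im := by
    rw [hw]; exact integral_im hzf
  -- the combination A
  set combo : ℝ → ℝ := fun t => t ^ (p+1) * ((z.re^2 + z.im^2) / Complex.normSq (z - t))
    with hcombo
  have hcomboeq : ∀ t : ℝ,
      (z * ((t:ℂ) ^ (p+1) / (z - t))).re - (z.re / z.im) * (z * ((t:ℂ) ^ (p+1) / (z - t))).im
        = combo t := fun t => pointwise_id z hy t p
  have hcomboInt : Integrable combo μ := by
    refine (hzf.re.sub (hzf.im.const_mul (z.re / z.im))).congr (ae_of_all _ fun t => ?_)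
    simpa [mul_comm] using hcomboeq t
  have hA : ∫ t, combo t ∂μ = w.re - (z.re / z.im) * w.im := by
    have hre2 : Integrable (fun t : ℝ => (z * ((t:ℂ) ^ (p+1) / (z - t))).re) μ := hzf.re
    have him2 : Integrable (fun t : ℝ => (z.re / z.im) * (z * ((t:ℂ) ^ (p+1) / (z - t))).im) μ :=
      hzf.im.const_mul _
    rw [← hre, ← him, ← integral_const_mul, ← integral_sub hre2 him2]
    refine integral_congr_ae (ae_of_all _ fun t => ?_)
    exact (hcomboeq t).symm
  -- upper bound: A ≤ (1+η)|w|
  have hAub : ∫ t, combo t ∂μ ≤ (1 + η) * ‖w‖ := by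
    rw [hA]
    have ha1 : |w.re| ≤ ‖w‖ := Complex.abs_re_le_norm w
    have ha2 : |w.im| ≤ ‖w‖ := Complex.abs_im_le_norm w
    have hb1 : |z.re / z.im| ≤ η := by
      rw [abs_div, abs_of_pos hy, div_le_iff₀ hy]
      nlinarith
    have hb2 : |(z.re / z.im) * w.im| ≤ η * ‖w‖ := by
      rw [abs_mul]
      exact mul_le_mul hb1 ha2 (abs_nonneg _) hη.le
    have hc1 := le_abs_self w.re
    have hc2 := neg_abs_le ((z.re / z.im) * w.im)
    linarith
  -- lower bound via lintegral
  have hnonneg : 0 ≤ᵐ[μ] combo := by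
    refine (ae_nn μ h0).mono fun t ht => ?_
    have hNv : 0 ≤ Complex.normSq (z - t) := Complex.normSq_nonneg _
    have : (0:ℝ) ≤ (z.re^2 + z.im^2) / Complex.normSq (z - t) := by positivity
    simpa [hcombo] using mul_nonneg (pow_nonneg ht _) this
  have heqlint : ∫ t, combo t ∂μ = (∫⁻ t, ENNReal.ofReal (combo t) ∂μ).toReal :=
    integral_eq_lintegral_of_nonneg_ae hnonneg hcomboInt.aestronglyMeasurable
  have hlintfin : (∫⁻ t, ENNReal.ofReal (combo t) ∂μ) ≠ ⊤ := by
    have hle : (∫⁻ t, ENNReal.ofReal (combo t) ∂μ) ≤ ∫⁻ t, ‖combo t‖ₑ ∂μ := by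
      refine lintegral_mono fun t => ?_
      rw [Real.enorm_eq_ofReal_abs]
      exact ENNReal.ofReal_le_ofReal (le_abs_self _)
    exact (hle.trans_lt hcomboInt.hasFiniteIntegral).ne
  have hSle : ENNReal.ofReal C ≤ ∫⁻ t, ENNReal.ofReal (combo t) ∂μ := by
    refine hnS.trans (lintegral_mono_ae ((ae_nn μ h0).mono fun t ht => ?_))
    exact ENNReal.ofReal_le_ofReal (plb z hy t ht p (by linarith) hzR)
  -- conclude
  have hCle : C ≤ ∫ t, combo t ∂μ := by
    rw [heqlint]
    have := ENNReal.toReal_mono hlintfin hSle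
    rwa [ENNReal.toReal_ofReal hC0] at this
  have hfinal : max b 0 * (1 + η) ≤ (1 + η) * ‖w‖ := le_trans hCle hAub
  have : max b 0 ≤ ‖w‖ := by
    rw [mul_comm] at hfinal
    exact le_of_mul_le_mul_left hfinal hηpos
  exact le_trans (le_max_left b 0) this
end
end

section
/- Let p be a nonnegative integer, α ∈ (p, p+1], and μ a probability measure in M_{p,α}. Then for any β ∈ [0, (α−p)/(α−p+1)), we have r_G(z) = o(z^{−β}) as z→∞ non-tangentially (fractional powers taken with the principal branch of the logarithm on the upper half-plane). -/
open MeasureTheory Filter Topology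
open scoped ENNReal

noncomputable section

lemma dyadic_cover {X t : ℝ} (hX : 0 < X) (ht : X < t) :
    ∃ k : ℕ, X * 2 ^ k < t ∧ t ≤ X * 2 ^ (k + 1) := by
  have h : ∃ n : ℕ, t ≤ X * 2 ^ n := by
    obtain ⟨n, hn⟩ := pow_unbounded_of_one_lt (t / X) (by norm_num : (1:ℝ) < 2)
    exact ⟨n, by rw [div_lt_iff₀ hX] at hn; linarith [hn]⟩
  classical
  have hspec : t ≤ X * 2 ^ (Nat.find h) := Nat.find_spec h
  have hn0 : Nat.find h ≠ 0 := by
    intro h0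
    rw [h0] at hspec; simp at hspec; linarith
  obtain ⟨k, hk⟩ := Nat.exists_eq_succ_of_ne_zero hn0
  have hmin : ¬ (t ≤ X * 2 ^ k) := Nat.find_min h (by omega)
  rw [hk] at hspec
  exact ⟨k, lt_of_not_ge hmin, hspec⟩

lemma tail_bound (μ : Measure ℝ) [IsProbabilityMeasure μ] {α γ : ℝ}
    (hrv : RegVarying (fun y : ℝ => (μ (Set.Ioi y)).toReal) (-α)) (hγ : γ < α) (hγ0 : 0 ≤ γ) :
    ∃ C X : ℝ, 0 ≤ C ∧ 1 ≤ X ∧ ∀ x, X ≤ x → (μ (Set.Ioi x)).toReal ≤ C * x ^ (-γ) := by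
  set f : ℝ → ℝ := fun y => (μ (Set.Ioi y)).toReal with hf
  have hanti : ∀ {a b : ℝ}, a ≤ b → f b ≤ f a := by
    intro a b hab
    exact ENNReal.toReal_mono (measure_ne_top μ _) (measure_mono (Set.Ioi_subset_Ioi hab))
  have hfnn : ∀ a : ℝ, 0 ≤ f a := fun a => ENNReal.toReal_nonneg
  have hlim := hrv.2 2 (by norm_num)
  have hlt : (2:ℝ) ^ (-α) < (2:ℝ) ^ (-γ) :=
    Real.rpow_lt_rpow_of_exponent_lt (by norm_num) (by linarith)
  have hev : ∀ᶠ x in atTop, f (2 * x) / f x < (2:ℝ) ^ (-γ) :=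
    hlim.eventually_lt_const hlt
  obtain ⟨X₀, hX₀⟩ := hev.exists_forall_of_atTop
  set X : ℝ := max X₀ 1 with hX
  have hX1 : (1:ℝ) ≤ X := le_max_right _ _
  have hX0 : (0:ℝ) < X := lt_of_lt_of_le one_pos hX1
  have hstep : ∀ x, X ≤ x → f (2 * x) ≤ (2:ℝ) ^ (-γ) * f x := by
    intro x hx
    have h1 := hX₀ x (le_trans (le_max_left _ _) hx)
    have hfx : 0 < f x ∨ f x = 0 := (hfnn x).lt_or_eq.imp id Eq.symm
    rcases hfx with hpos | hzero
    · rw [div_lt_iff₀ hpos] at h1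
      linarith
    · have : f (2 * x) ≤ f x := hanti (by nlinarith)
      rw [hzero] at this ⊢
      have : f (2*x) = 0 := le_antisymm this (hfnn _)
      rw [this]; positivity
  have hiter : ∀ k : ℕ, f (X * 2 ^ k) ≤ ((2:ℝ) ^ (-γ)) ^ k * f X := by
    intro k
    induction k with
    | zero => simp
    | succ k ih =>
      have : (X * 2 ^ (k+1)) = 2 * (X * 2 ^ k) := by ring
      rw [this]
      calc f (2 * (X * 2 ^ k)) ≤ (2:ℝ) ^ (-γ) * f (X * 2 ^ k) := by
            apply hstep
            nlinarith [pow_le_pow_right₀ (by norm_num : (1:ℝ) ≤ 2) (Nat.zero_le k), hX0]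
        _ ≤ (2:ℝ) ^ (-γ) * (((2:ℝ) ^ (-γ)) ^ k * f X) := by
            have : (0:ℝ) ≤ (2:ℝ) ^ (-γ) := (Real.rpow_pos_of_pos two_pos _).le
            nlinarith [ih]
        _ = ((2:ℝ) ^ (-γ)) ^ (k+1) * f X := by ring
  refine ⟨f X * (2 * X) ^ γ, X, by positivity, hX1, ?_⟩
  intro x hx
  rcases eq_or_lt_of_le hx with heq | hlt'
  · rw [← heq]
    have hX' : X ^ γ ≤ (2 * X) ^ γ := Real.rpow_le_rpow hX0.le (by linarith) hγ0
    have h6 : (1:ℝ) ≤ (2 * X) ^ γ * X ^ (-γ) := by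
      rw [Real.rpow_neg hX0.le, ← div_eq_mul_inv,
        le_div_iff₀ (Real.rpow_pos_of_pos hX0 γ), one_mul]
      exact hX'
    calc f X ≤ f X * ((2 * X) ^ γ * X ^ (-γ)) := le_mul_of_one_le_right (hfnn X) h6
      _ = f X * (2 * X) ^ γ * X ^ (-γ) := by ring
  · obtain ⟨k, hk1, hk2⟩ := dyadic_cover hX0 hlt'
    have h1 : f x ≤ ((2:ℝ) ^ (-γ)) ^ k * f X := le_trans (hanti hk1.le) (hiter k)
    -- (2^k)^{-γ} bound: x ≤ X*2^(k+1) = 2X * 2^k so 2^k ≥ x/(2X)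
    have h2 : x / (2 * X) ≤ (2:ℝ) ^ k := by
      rw [div_le_iff₀ (by positivity)]
      calc x ≤ X * 2 ^ (k+1) := hk2
        _ = 2 ^ k * (2 * X) := by ring
    have hxpos : (0:ℝ) < x := lt_trans hX0 hlt'
    have h3 : ((2:ℝ) ^ (-γ)) ^ k = ((2:ℝ) ^ k : ℝ) ^ (-γ) := by
      rw [← Real.rpow_natCast ((2:ℝ) ^ (-γ)) k, ← Real.rpow_natCast (2:ℝ) k,
        ← Real.rpow_mul (by norm_num), ← Real.rpow_mul (by norm_num), mul_comm]
    have h4 : ((2:ℝ) ^ k : ℝ) ^ (-γ) ≤ (x / (2 * X)) ^ (-γ) := by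
      apply Real.rpow_le_rpow_of_nonpos (by positivity) h2 (neg_nonpos.mpr hγ0)
    have h5 : (x / (2 * X)) ^ (-γ) = (2 * X) ^ γ * x ^ (-γ) := by
      rw [Real.rpow_neg (by positivity), Real.div_rpow hxpos.le (by positivity), inv_div,
        Real.rpow_neg hxpos.le, div_eq_mul_inv]
    calc f x ≤ ((2:ℝ) ^ (-γ)) ^ k * f X := h1
      _ ≤ (2 * X) ^ γ * x ^ (-γ) * f X := by
          rw [h3]
          have := le_trans h4 (le_of_eq h5)
          nlinarith [hfnn X]
      _ = f X * (2 * X) ^ γ * x ^ (-γ) := by ring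

lemma pow_rpow_comm (n : ℕ) (a : ℝ) : ((2:ℝ) ^ n) ^ a = ((2:ℝ) ^ a) ^ n := by
  rw [← Real.rpow_natCast ((2:ℝ) ^ a) n, ← Real.rpow_natCast (2:ℝ) n,
    ← Real.rpow_mul (by norm_num), ← Real.rpow_mul (by norm_num), mul_comm]

lemma moment_finite (μ : Measure ℝ) [IsProbabilityMeasure μ] (hneg : μ (Set.Iio 0) = 0)
    {q γ C X : ℝ} (hq0 : 0 ≤ q) (hqγ : q < γ) (hX : 1 ≤ X) (hC : 0 ≤ C)
    (htail : ∀ x, X ≤ x → (μ (Set.Ioi x)).toReal ≤ C * x ^ (-γ)) :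
    ∫⁻ t, ENNReal.ofReal (|t| ^ q) ∂μ ≠ ⊤ := by
  have hX0 : (0:ℝ) < X := lt_of_lt_of_le one_pos hX
  set g : ℝ → ℝ≥0∞ := fun t => ENNReal.ofReal (|t| ^ q) with hg
  set S : ℕ → Set ℝ := fun n => match n with
    | 0 => Set.Icc 0 X
    | (k+1) => Set.Ioc (X * 2 ^ k) (X * 2 ^ (k+1)) with hS
  have hcover : Set.Ici (0:ℝ) ⊆ ⋃ n, S n := by
    intro t ht
    rcases le_or_gt t X with h | h
    · exact Set.mem_iUnion.mpr ⟨0, ⟨ht, h⟩⟩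
    · obtain ⟨k, hk1, hk2⟩ := dyadic_cover hX0 h
      exact Set.mem_iUnion.mpr ⟨k + 1, ⟨hk1, hk2⟩⟩
  have htail' : ∀ x, X ≤ x → μ (Set.Ioi x) ≤ ENNReal.ofReal (C * x ^ (-γ)) := by
    intro x hx
    rw [← ENNReal.ofReal_toReal (measure_ne_top μ (Set.Ioi x))]
    exact ENNReal.ofReal_le_ofReal (htail x hx)
  -- bound each piece
  set D : ℝ := C * X ^ q * X ^ (-γ) * 2 ^ q with hD
  set ρ : ℝ := (2:ℝ) ^ q * (2:ℝ) ^ (-γ) with hρ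
  have hρ0 : 0 ≤ ρ := by positivity
  have hρ1 : ρ < 1 := by
    rw [hρ, ← Real.rpow_add two_pos]
    exact Real.rpow_lt_one_of_one_lt_of_neg (by norm_num) (by linarith)
  have hD0 : 0 ≤ D := by positivity
  have hpiece0 : ∫⁻ t in S 0, g t ∂μ ≤ ENNReal.ofReal (X ^ q) := by
      calc ∫⁻ t in S 0, g t ∂μ ≤ ∫⁻ _ in S 0, ENNReal.ofReal (X ^ q) ∂μ := by
            apply setLIntegral_mono' (by exact measurableSet_Icc)
            intro t ht
            apply ENNReal.ofReal_le_ofReal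
            apply Real.rpow_le_rpow (abs_nonneg t) _ hq0
            rw [abs_of_nonneg ht.1]; exact ht.2
        _ = ENNReal.ofReal (X ^ q) * μ (S 0) := setLIntegral_const _ _
        _ ≤ ENNReal.ofReal (X ^ q) * 1 := by
            exact mul_le_mul_right prob_le_one _
        _ = _ := by rw [mul_one]
  have hpieceS : ∀ k : ℕ, ∫⁻ t in S (k+1), g t ∂μ ≤
      ENNReal.ofReal D * (ENNReal.ofReal ρ) ^ k := by
      intro k
      have hb : (0:ℝ) < X * 2 ^ k := by positivity
      calc ∫⁻ t in S (k+1), g t ∂μ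
          ≤ ∫⁻ _ in S (k+1), ENNReal.ofReal ((X * 2 ^ (k+1)) ^ q) ∂μ := by
            apply setLIntegral_mono' (by exact measurableSet_Ioc)
            intro t ht
            apply ENNReal.ofReal_le_ofReal
            apply Real.rpow_le_rpow (abs_nonneg t) _ hq0
            rw [abs_of_nonneg (le_trans hb.le ht.1.le)]; exact ht.2
        _ = ENNReal.ofReal ((X * 2 ^ (k+1)) ^ q) * μ (S (k+1)) := setLIntegral_const _ _
        _ ≤ ENNReal.ofReal ((X * 2 ^ (k+1)) ^ q) * ENNReal.ofReal (C * (X * 2 ^ k) ^ (-γ)) := by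
            apply mul_le_mul_right
            refine le_trans (measure_mono ?_) (htail' (X * 2 ^ k) ?_)
            · exact Set.Ioc_subset_Ioi_self
            · nlinarith [one_le_pow₀ (by norm_num : (1:ℝ) ≤ 2) (n := k)]
        _ = ENNReal.ofReal (D * ρ ^ k) := by
            rw [← ENNReal.ofReal_mul (by positivity)]
            congr 1
            rw [Real.mul_rpow hX0.le (by positivity), Real.mul_rpow hX0.le (by positivity),
              pow_rpow_comm, pow_rpow_comm, hD, hρ]
            ring
        _ = _ := by
            rw [ENNReal.ofReal_mul hD0, ENNReal.ofReal_pow hρ0]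
  have hw1 : ENNReal.ofReal ρ < 1 := by
    rw [← ENNReal.ofReal_one]
    exact ENNReal.ofReal_lt_ofReal_iff_of_nonneg hρ0 |>.mpr hρ1
  have hchain : ∫⁻ t, g t ∂μ ≤
      ENNReal.ofReal (X ^ q) + ENNReal.ofReal D * (1 - ENNReal.ofReal ρ)⁻¹ := by
    calc ∫⁻ t, g t ∂μ = ∫⁻ t in Set.univ, g t ∂μ := (setLIntegral_univ _).symm
      _ = ∫⁻ t in Set.Iio 0 ∪ Set.Ici 0, g t ∂μ := by rw [Set.Iio_union_Ici]
      _ ≤ ∫⁻ t in Set.Iio 0, g t ∂μ + ∫⁻ t in Set.Ici 0, g t ∂μ := lintegral_union_le _ _ _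
      _ = ∫⁻ t in Set.Ici 0, g t ∂μ := by
          rw [setLIntegral_measure_zero _ _ hneg, zero_add]
      _ ≤ ∫⁻ t in ⋃ n, S n, g t ∂μ := lintegral_mono_set hcover
      _ ≤ ∑' n, ∫⁻ t in S n, g t ∂μ := lintegral_iUnion_le _ _
      _ = ∫⁻ t in S 0, g t ∂μ + ∑' k : ℕ, ∫⁻ t in S (k+1), g t ∂μ :=
          tsum_eq_zero_add' ENNReal.summable
      _ ≤ ENNReal.ofReal (X ^ q) + ∑' k : ℕ, ENNReal.ofReal D * (ENNReal.ofReal ρ) ^ k :=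
          add_le_add hpiece0 (ENNReal.tsum_le_tsum hpieceS)
      _ = ENNReal.ofReal (X ^ q) + ENNReal.ofReal D * (1 - ENNReal.ofReal ρ)⁻¹ := by
          rw [ENNReal.tsum_mul_left, ENNReal.tsum_geometric]
  refine ne_top_of_le_ne_top ?_ hchain
  apply ENNReal.add_ne_top.mpr
  constructor
  · exact ENNReal.ofReal_ne_top
  · apply ENNReal.mul_ne_top ENNReal.ofReal_ne_top
    rw [ENNReal.inv_ne_top]
    exact (tsub_pos_of_lt hw1).ne'


set_option maxHeartbeats 1000000 in
/-- Proposition (upper bound for `r_G`): if `μ ∈ M_{p,α}` with `α ∈ (p, p+1]`, then for any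
`β ∈ [0, (α−p)/(α−p+1))` one has `r_G(z) = o(z^{−β})` as `z → ∞` non-tangentially
(principal branch powers). -/
theorem stmt16 (μ : Measure ℝ) (p : ℕ) (α β : ℝ)
    (hμ : MemMp μ p)
    (hrv : RegVarying (fun y : ℝ => (μ (Set.Ioi y)).toReal) (-α))
    (hα1 : (p : ℝ) < α) (hα2 : α ≤ (p : ℝ) + 1)
    (hβ0 : 0 ≤ β) (hβ : β < (α - p) / (α - p + 1)) :
    ∀ η : ℝ, 0 < η → ∀ ε : ℝ, 0 < ε → ∃ M : ℝ, 0 < M ∧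
      ∀ z : ℂ, 0 < z.im → |z.re| < η * z.im → M < ‖z‖ →
        ‖rG μ p z‖ ≤ ε * ‖z ^ (-(β : ℂ))‖ := by
  intro η hη ε hε
  haveI : IsProbabilityMeasure μ := hμ.1
  have hp0 : (0:ℝ) ≤ (p:ℝ) := Nat.cast_nonneg p
  have hs : (0:ℝ) < α - p := by linarith
  have hs1 : α - (p:ℝ) ≤ 1 := by linarith
  have hβs : β < α - p := lt_of_lt_of_le hβ (div_le_self hs.le (by linarith))
  have hβ1 : β < 1 := lt_of_lt_of_le hβ (le_of_lt ((div_lt_one (by linarith)).mpr (by linarith)))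
  obtain ⟨θ, hθ⟩ : ∃ x : ℝ, x = (β + (α - p)) / 2 := ⟨_, rfl⟩
  have hθβ : β < θ := by rw [hθ]; linarith
  have hθs : θ < α - p := by rw [hθ]; linarith
  have hθ1 : θ < 1 := by rw [hθ]; linarith
  have hθ0 : 0 < θ := by rw [hθ]; linarith
  obtain ⟨γ, hγ⟩ : ∃ x : ℝ, x = p + (θ + (α - p)) / 2 := ⟨_, rfl⟩
  obtain ⟨q, hq⟩ : ∃ x : ℝ, x = (p:ℝ) + θ := ⟨_, rfl⟩
  have hγα : γ < α := by rw [hγ]; linarith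
  have hγq : q < γ := by rw [hγ, hq]; linarith
  have hγ0 : (0:ℝ) ≤ γ := by rw [hγ]; linarith
  have hq0 : (0:ℝ) ≤ q := by rw [hq]; linarith
  have hqpos : (0:ℝ) < q := by rw [hq]; linarith
  obtain ⟨C, X, hC, hX, htail⟩ := tail_bound μ hrv hγα hγ0
  obtain ⟨J, hJ⟩ : ∃ x : ℝ≥0∞, x = ∫⁻ t, ENNReal.ofReal (|t| ^ q) ∂μ := ⟨_, rfl⟩
  have hJtop : J ≠ ⊤ := by
    rw [hJ]
    exact moment_finite μ hμ.2.1 hq0 hγq hX hC htail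
  obtain ⟨c, hc⟩ : ∃ x : ℝ, x = Real.sqrt (1 + η ^ 2) := ⟨_, rfl⟩
  have hc1 : 1 ≤ c := by
    rw [hc]
    have h := Real.sqrt_le_sqrt (by nlinarith : (1:ℝ) ≤ 1 + η ^ 2)
    rwa [Real.sqrt_one] at h
  obtain ⟨K, hK⟩ : ∃ x : ℝ, x = 3 * c := ⟨_, rfl⟩
  have hK3 : (3:ℝ) ≤ K := by rw [hK]; linarith
  have hK0 : (0:ℝ) < K := by linarith
  obtain ⟨K', hK'⟩ : ∃ x : ℝ, x = K * J.toReal := ⟨_, rfl⟩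
  have hK'0 : 0 ≤ K' := by rw [hK']; exact mul_nonneg hK0.le ENNReal.toReal_nonneg
  obtain ⟨d, hd⟩ : ∃ x : ℝ, x = θ - β := ⟨_, rfl⟩
  have hd0 : 0 < d := by rw [hd]; linarith
  refine ⟨max 1 ((K' / ε) ^ (1 / d)), lt_of_lt_of_le one_pos (le_max_left _ _), ?_⟩
  intro z him hre hM
  obtain ⟨R, hR⟩ : ∃ x : ℝ, x = ‖z‖ := ⟨_, rfl⟩
  rw [← hR] at hM
  have hR1 : 1 < R := lt_of_le_of_lt (le_max_left _ _) hM
  have hR0 : 0 < R := by linarith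
  have hzne : z ≠ 0 := by
    intro h; rw [h] at him; simp at him
  -- cone estimate
  have him2 : R ≤ c * z.im := by
    have h1 : R ^ 2 ≤ (1 + η ^ 2) * z.im ^ 2 := by
      have e1 : R ^ 2 = z.re ^ 2 + z.im ^ 2 := by
        rw [hR, Complex.sq_norm, Complex.normSq_apply]; ring
      nlinarith [sq_abs z.re, abs_nonneg z.re]
    calc R = Real.sqrt (R ^ 2) := (Real.sqrt_sq hR0.le).symm
      _ ≤ Real.sqrt ((1 + η ^ 2) * z.im ^ 2) := Real.sqrt_le_sqrt h1
      _ = c * z.im := by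
          rw [Real.sqrt_mul (by positivity), Real.sqrt_sq him.le, hc]
  have hcone : ∀ t : ℝ, 0 ≤ t → (R + t) / K ≤ ‖z - t‖ := by
    intro t ht
    have habs_im : z.im ≤ ‖z - t‖ := by
      have h1 : |(z - (t:ℂ)).im| ≤ ‖z - t‖ := Complex.abs_im_le_norm _
      have h2 : (z - (t:ℂ)).im = z.im := by simp
      rw [h2, abs_of_pos him] at h1
      exact h1
    rcases le_or_gt t (2 * R) with hcase | hcase
    · calc (R + t) / K ≤ 3 * R / K :=
            div_le_div_of_nonneg_right (by linarith) hK0.le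
        _ = R / c := by rw [hK]; field_simp
        _ ≤ z.im := by
            rw [div_le_iff₀ (by linarith : (0:ℝ) < c)]
            calc R ≤ c * z.im := him2
              _ = z.im * c := mul_comm _ _
        _ ≤ ‖z - t‖ := habs_im
    · have h3 : t - R ≤ ‖z - t‖ := by
        have h4 : ‖(t:ℂ)‖ - ‖z‖ ≤ ‖(t:ℂ) - z‖ := norm_sub_norm_le _ _
        have h5 : ‖(t:ℂ) - z‖ = ‖z - (t:ℂ)‖ := norm_sub_rev _ _
        have h6 : ‖(t:ℂ)‖ = t := by
          rw [Complex.norm_real, Real.norm_eq_abs, abs_of_nonneg ht]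
        have h7 : ‖z‖ = R := by rw [hR]
        rw [h5, h6, h7] at h4
        linarith [h4]
      calc (R + t) / K ≤ (R + t) / 3 := by
            apply div_le_div_of_nonneg_left (by linarith) (by norm_num) hK3
        _ ≤ t - R := by linarith
        _ ≤ ‖z - t‖ := h3
  -- pointwise bound
  have hpt : ∀ t : ℝ, 0 ≤ t →
      ‖(t : ℂ) ^ (p + 1) / (z - (t : ℂ))‖ ≤ K * R ^ (-θ) * |t| ^ q := by
    intro t ht
    have hden : 0 < ‖z - t‖ :=
      lt_of_lt_of_le (div_pos (by linarith) hK0) (hcone t ht)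
    have hnorm : ‖(t : ℂ) ^ (p + 1) / (z - (t : ℂ))‖ = t ^ (p + 1) / ‖z - t‖ := by
      rw [norm_div, norm_pow, Complex.norm_real, Real.norm_eq_abs, abs_of_nonneg ht]
    rw [hnorm]
    have hkey : t ^ (p + 1) ≤ t ^ q * (R + t) * R ^ (-θ) := by
      rcases eq_or_lt_of_le ht with h0 | hpos
    -- t = 0
      · rw [← h0]
        rw [Real.zero_rpow hqpos.ne']
        simp
      · have e1 : (t : ℝ) ^ (p + 1) = t ^ ((p:ℝ) + 1) := by
          rw [← Real.rpow_natCast t (p + 1)]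
          congr 1
          push_cast
          ring
        have e2 : t ^ ((p:ℝ) + 1) = t ^ q * t ^ (1 - θ) := by
          rw [← Real.rpow_add hpos, hq]
          congr 1
          ring
        have e3 : t ^ (1 - θ) ≤ (R + t) ^ (1 - θ) :=
          Real.rpow_le_rpow ht (by linarith) (by linarith)
        have e4 : (R + t) ^ (1 - θ) = (R + t) * (R + t) ^ (-θ) := by
          rw [show (1:ℝ) - θ = 1 + (-θ) by ring, Real.rpow_add (by linarith), Real.rpow_one]
        have e5 : (R + t) ^ (-θ) ≤ R ^ (-θ) :=
          Real.rpow_le_rpow_of_nonpos hR0 (by linarith) (by linarith)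
        calc (t : ℝ) ^ (p + 1) = t ^ q * t ^ (1 - θ) := by rw [e1, e2]
          _ ≤ t ^ q * ((R + t) * (R + t) ^ (-θ)) := by
              rw [← e4]
              exact mul_le_mul_of_nonneg_left e3 (Real.rpow_nonneg ht q)
          _ ≤ t ^ q * ((R + t) * R ^ (-θ)) := by
              apply mul_le_mul_of_nonneg_left _ (Real.rpow_nonneg ht q)
              exact mul_le_mul_of_nonneg_left e5 (by linarith)
          _ = t ^ q * (R + t) * R ^ (-θ) := by ring
    calc t ^ (p + 1) / ‖z - t‖ ≤ t ^ (p + 1) / ((R + t) / K) :=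
          div_le_div_of_nonneg_left (pow_nonneg ht _)
            (div_pos (by linarith) hK0) (hcone t ht)
      _ = K * t ^ (p + 1) / (R + t) := by
          rw [div_div_eq_mul_div, mul_comm]
      _ ≤ K * (t ^ q * (R + t) * R ^ (-θ)) / (R + t) := by
          apply div_le_div_of_nonneg_right _ (by linarith : (0:ℝ) ≤ R + t)
          exact mul_le_mul_of_nonneg_left hkey hK0.le
      _ = K * R ^ (-θ) * t ^ q := by
          rw [div_eq_iff (ne_of_gt (by linarith : (0:ℝ) < R + t))]
          ring
      _ = K * R ^ (-θ) * |t| ^ q := by rw [abs_of_nonneg ht]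
  -- integral bound
  have hae : ∀ᵐ t ∂μ, 0 ≤ t := by
    rw [ae_iff]
    convert hμ.2.1 using 2
    ext t
    simp [not_le, Set.mem_Iio]
  have hint : ‖rG μ p z‖ ≤ K' * R ^ (-θ) := by
    rw [rG]
    calc ‖∫ t : ℝ, (t : ℂ) ^ (p + 1) / (z - (t : ℂ)) ∂μ‖
        ≤ (∫⁻ t, ENNReal.ofReal ‖(t : ℂ) ^ (p + 1) / (z - (t : ℂ))‖ ∂μ).toReal :=
          norm_integral_le_lintegral_norm _
      _ ≤ (ENNReal.ofReal (K * R ^ (-θ)) * J).toReal := by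
          apply ENNReal.toReal_mono
          · exact ENNReal.mul_ne_top ENNReal.ofReal_ne_top hJtop
          · rw [hJ, ← lintegral_const_mul' _ _ ENNReal.ofReal_ne_top]
            apply lintegral_mono_ae
            filter_upwards [hae] with t ht
            rw [← ENNReal.ofReal_mul (by positivity)]
            exact ENNReal.ofReal_le_ofReal (hpt t ht)
      _ = K * R ^ (-θ) * J.toReal := by
          rw [ENNReal.toReal_mul, ENNReal.toReal_ofReal (by positivity)]
      _ = K' * R ^ (-θ) := by rw [hK']; ring
  -- conclude
  have hcpow : ‖z ^ (-(β : ℂ))‖ = R ^ (-β) := by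
    rw [Complex.norm_cpow_of_ne_zero hzne, ← hR]
    simp
  rw [hcpow]
  refine le_trans hint ?_
  have hfin : K' ≤ ε * R ^ d := by
    have h1 : (K' / ε) ^ (1 / d) < R := lt_of_le_of_lt (le_max_right _ _) hM
    have h2 : ((K' / ε) ^ (1 / d)) ^ d ≤ R ^ d :=
      Real.rpow_le_rpow (Real.rpow_nonneg (by positivity) _) h1.le hd0.le
    rw [← Real.rpow_mul (by positivity), one_div_mul_cancel hd0.ne', Real.rpow_one] at h2
    rw [div_le_iff₀ hε] at h2
    linarith [h2]
  calc K' * R ^ (-θ) ≤ ε * R ^ d * R ^ (-θ) :=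
        mul_le_mul_of_nonneg_right hfin (Real.rpow_nonneg hR0.le _)
    _ = ε * R ^ (-β) := by
        rw [mul_assoc, ← Real.rpow_add hR0, hd]
        ring_nf
end
end
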